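/- Let f:(0,∞)→(0,∞) be AH-convex (hence convex) and g(x,y)=y f(x/y). Then for all a,b,x,y>0 and α∈[0,1]: g(αa+(1-α)b, αx+(1-α)y) ≤ H_α( αg(a,x)+(1-α)g(a,y), αg(b,x)+(1-α)g(b,y) ), where H_α(u,v)=(α/u+(1-α)/v)^{-1}. -/

import Mathlib

private lemma comb_pos {u v β : ℝ} (hu : 0 < u) (hv : 0 < v) (h0 : 0 ≤ β) (h1 : β ≤ 1) :
    0 < β * u + (1 - β) * v := by
  rcases eq_or_lt_of_le h0 with h | h
  · rw [← h]; linarith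
  · nlinarith [mul_pos h hu, mul_nonneg (by linarith : (0:ℝ) ≤ 1 - β) hv.le]

theorem perspective_ah (f : ℝ → ℝ) (hf : ∀ x ∈ Set.Ioi (0:ℝ), 0 < f x)
    (hAH : ∀ u ∈ Set.Ioi (0:ℝ), ∀ v ∈ Set.Ioi (0:ℝ), ∀ α ∈ Set.Icc (0:ℝ) 1,
      f (α * u + (1 - α) * v) ≤ (α / f u + (1 - α) / f v)⁻¹)
    (g : ℝ → ℝ → ℝ) (hg : ∀ x y : ℝ, g x y = y * f (x / y)) :
    ∀ a ∈ Set.Ioi (0:ℝ), ∀ b ∈ Set.Ioi (0:ℝ), ∀ x ∈ Set.Ioi (0:ℝ), ∀ y ∈ Set.Ioi (0:ℝ),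
      ∀ α ∈ Set.Icc (0:ℝ) 1,
      g (α * a + (1 - α) * b) (α * x + (1 - α) * y) ≤
        (α / (α * g a x + (1 - α) * g a y) + (1 - α) / (α * g b x + (1 - α) * g b y))⁻¹ := by
  -- AH-convexity implies ordinary convexity
  have hconv : ∀ u ∈ Set.Ioi (0:ℝ), ∀ v ∈ Set.Ioi (0:ℝ), ∀ t ∈ Set.Icc (0:ℝ) 1,
      f (t * u + (1 - t) * v) ≤ t * f u + (1 - t) * f v := by
    intro u hu v hv t ht
    have h1 := hAH u hu v hv t ht
    have hfu := hf u hu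
    have hfv := hf v hv
    obtain ⟨ht0, ht1⟩ := ht
    have key : (t / f u + (1 - t) / f v)⁻¹ ≤ t * f u + (1 - t) * f v := by
      rw [div_add_div _ _ (ne_of_gt hfu) (ne_of_gt hfv), inv_div]
      rw [div_le_iff₀ (show (0:ℝ) < t * f v + f u * (1 - t) by nlinarith [comb_pos hfv hfu ht0 ht1])]
      nlinarith [sq_nonneg (f u - f v), mul_nonneg (mul_nonneg ht0 (by linarith : (0:ℝ) ≤ 1 - t)) (sq_nonneg (f u - f v))]
    linarith
  intro a ha b hb x hx y hy α hα
  simp only [Set.mem_Ioi] at ha hb hx hy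
  obtain ⟨hα0, hα1⟩ := hα
  set s := α * x + (1 - α) * y with hs
  have hs0 : 0 < s := comb_pos hx hy hα0 hα1
  have hsne := hs0.ne'
  have hxne := hx.ne'
  have hyne := hy.ne'
  -- perspective convexity in the second variable
  have persp : ∀ c : ℝ, 0 < c →
      s * f (c / s) ≤ α * (x * f (c / x)) + (1 - α) * (y * f (c / y)) := by
    intro c hc
    have hlam : α * x / s ∈ Set.Icc (0:ℝ) 1 := by
      constructor
      · positivity
      · rw [div_le_one hs0]; nlinarith [mul_nonneg (by linarith : (0:ℝ) ≤ 1 - α) hy.le]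
    have hcx : c / x ∈ Set.Ioi (0:ℝ) := by simp only [Set.mem_Ioi]; positivity
    have hcy : c / y ∈ Set.Ioi (0:ℝ) := by simp only [Set.mem_Ioi]; positivity
    have h2 := hconv (c / x) hcx (c / y) hcy (α * x / s) hlam
    have heq : (α * x / s) * (c / x) + (1 - α * x / s) * (c / y) = c / s := by
      field_simp
      ring
    rw [heq] at h2
    have h3 : s * f (c / s) ≤ s * ((α * x / s) * f (c / x) + (1 - α * x / s) * f (c / y)) :=
      mul_le_mul_of_nonneg_left h2 hs0.le
    calc s * f (c / s) ≤ _ := h3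
      _ = α * (x * f (c / x)) + (1 - α) * (y * f (c / y)) := by field_simp; ring
  -- main argument
  have hus : a / s ∈ Set.Ioi (0:ℝ) := by simp only [Set.mem_Ioi]; positivity
  have hvs : b / s ∈ Set.Ioi (0:ℝ) := by simp only [Set.mem_Ioi]; positivity
  have hFa := hf _ hus
  have hFb := hf _ hvs
  set Fa := f (a / s)
  set Fb := f (b / s)
  have step1 : f ((α * a + (1 - α) * b) / s) ≤ (α / Fa + (1 - α) / Fb)⁻¹ := by
    have := hAH (a / s) hus (b / s) hvs α ⟨hα0, hα1⟩
    have heq : α * (a / s) + (1 - α) * (b / s) = (α * a + (1 - α) * b) / s := by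
      field_simp
    rwa [heq] at this
  set Ma := α * (x * f (a / x)) + (1 - α) * (y * f (a / y)) with hMa
  set Mb := α * (x * f (b / x)) + (1 - α) * (y * f (b / y)) with hMb
  have hpa : s * Fa ≤ Ma := persp a ha
  have hpb : s * Fb ≤ Mb := persp b hb
  have hMa0 : 0 < Ma := lt_of_lt_of_le (by positivity) hpa
  have hMb0 : 0 < Mb := lt_of_lt_of_le (by positivity) hpb
  set P := α / Fa + (1 - α) / Fb with hP
  have hP0 : 0 < P := by
    have := comb_pos (u := 1 / Fa) (v := 1 / Fb) (by positivity) (by positivity) hα0 hα1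
    rw [hP]
    calc (0:ℝ) < α * (1 / Fa) + (1 - α) * (1 / Fb) := this
      _ = α / Fa + (1 - α) / Fb := by ring
  set Q := α / Ma + (1 - α) / Mb with hQ
  have hQ0 : 0 < Q := by
    have := comb_pos (u := 1 / Ma) (v := 1 / Mb) (by positivity) (by positivity) hα0 hα1
    rw [hQ]
    calc (0:ℝ) < α * (1 / Ma) + (1 - α) * (1 / Mb) := this
      _ = α / Ma + (1 - α) / Mb := by ring
  have hQP : Q ≤ P / s := by
    have h4 : α / Ma ≤ α / (s * Fa) := div_le_div_of_nonneg_left hα0 (by positivity) hpa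
    have h5 : (1 - α) / Mb ≤ (1 - α) / (s * Fb) :=
      div_le_div_of_nonneg_left (by linarith) (by positivity) hpb
    have hsplit : P / s = α / (s * Fa) + (1 - α) / (s * Fb) := by
      rw [hP]; field_simp
    rw [hsplit, hQ]
    exact add_le_add h4 h5
  simp only [hg]
  rw [← hMa, ← hMb, ← hQ]
  calc s * f ((α * a + (1 - α) * b) / s) ≤ s * P⁻¹ := by
        apply mul_le_mul_of_nonneg_left step1 hs0.le
    _ = (P / s)⁻¹ := by field_simp
    _ ≤ Q⁻¹ := inv_anti₀ hQ0 hQP
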